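/- Let M_n^{k,k−1} be the set of monotone permutations π ∈ S_n with π(1) = k and π(2) = k−1. The map sending π to the permutation π̄ ∈ S_{n−1} defined by π̄(1) = k−1 and, for 2 ≤ i ≤ n−1, π̄(i) = π(i+1) if π(i+1) < k and π̄(i) = π(i+1) − 1 if π(i+1) > k, is a bijection from M_n^{k,k−1} onto M_{n−1}^{k−1}, and it satisfies (−1)^{dr(π̄)} = (−1)^{dr(π)+k}. -/

import Mathlib

/-- A permutation `π` of `Fin n` (thought of as 1-based `S_n`) is *monotone* if for each
position `i`, either all earlier values are smaller, or all earlier values are larger. -/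
def IsMonotonePerm {n : ℕ} (π : Equiv.Perm (Fin n)) : Prop :=
  ∀ i : Fin n, (∀ j : Fin n, j < i → π j < π i) ∨ (∀ j : Fin n, j < i → π i < π j)

/-- A (0-based) position `i` is a *drop* of `π` if `i ≥ 1` (1-based position `i + 1 ≥ 2`)
and all earlier values are larger than `π i`. -/
def IsDrop {n : ℕ} (π : Equiv.Perm (Fin n)) (i : Fin n) : Prop :=
  0 < i.val ∧ ∀ j : Fin n, j < i → π i < π j

/-- `dr π` is the sum of the drops of `π`, as 1-based positions. -/
def dr {n : ℕ} (π : Equiv.Perm (Fin n)) : ℕ :=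
  ∑ i ∈ Finset.univ.filter
      (fun i : Fin n => 0 < i.val ∧ ∀ j : Fin n, j < i → π i < π j), (i.val + 1)

namespace MonoBij
open Equiv Finset

variable {n k : ℕ}

/-! ### The basic `succAbove`-based correspondence between `Perm (Fin (n+2))` with a
prescribed value at `0` and `Perm (Fin (n+1))`. -/

def extFun (p : Fin (n + 2)) (ρ : Perm (Fin (n + 1))) : Fin (n + 2) → Fin (n + 2) :=
  Fin.cases p (fun i => p.succAbove (ρ i))

lemma extFun_inj (p : Fin (n + 2)) (ρ : Perm (Fin (n + 1))) :
    Function.Injective (extFun p ρ) := by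
  intro a b h
  induction a using Fin.cases <;> induction b using Fin.cases <;>
    simp [extFun] at h ⊢
  · exact h

noncomputable def ext (p : Fin (n + 2)) (ρ : Perm (Fin (n + 1))) : Perm (Fin (n + 2)) :=
  Equiv.ofBijective _ (Finite.injective_iff_bijective.mp (extFun_inj p ρ))

@[simp] lemma ext_zero (p : Fin (n + 2)) (ρ) : ext p ρ 0 = p := rfl
@[simp] lemma ext_succ (p : Fin (n + 2)) (ρ) (i : Fin (n + 1)) :
    ext p ρ i.succ = p.succAbove (ρ i) := by
  simp [ext, extFun, Equiv.ofBijective_apply]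

def redFun (π : Perm (Fin (n + 2))) (i : Fin (n + 1)) : Fin (n + 1) :=
  (finSuccAboveEquiv (π 0)).symm ⟨π i.succ, fun hc => (Fin.succ_ne_zero i) (π.injective hc)⟩

lemma redFun_inj (π : Perm (Fin (n + 2))) : Function.Injective (redFun π) := by
  intro a b h
  have := (finSuccAboveEquiv (π 0)).symm.injective h
  have := congrArg Subtype.val this
  exact Fin.succ_injective _ (π.injective this)

noncomputable def red (π : Perm (Fin (n + 2))) : Perm (Fin (n + 1)) :=
  Equiv.ofBijective _ (Finite.injective_iff_bijective.mp (redFun_inj π))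

lemma succAbove_red (π : Perm (Fin (n + 2))) (i : Fin (n + 1)) :
    (π 0).succAbove (red π i) = π i.succ := by
  have := (finSuccAboveEquiv (π 0)).apply_symm_apply
    ⟨π i.succ, fun hc => (Fin.succ_ne_zero i) (π.injective hc)⟩
  have := congrArg Subtype.val this
  rw [show red π i = redFun π i from rfl, redFun]
  rw [finSuccAboveEquiv_apply] at this
  exact this

lemma ext_red (π : Perm (Fin (n + 2))) : ext (π 0) (red π) = π := by
  ext i
  induction i using Fin.cases with
  | zero => simp
  | succ i => simp [succAbove_red]

lemma red_ext (p : Fin (n + 2)) (ρ : Perm (Fin (n + 1))) : red (ext p ρ) = ρ := by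
  refine Equiv.ext fun i => ?_
  apply Fin.succAbove_right_injective (p := p)
  have h0 : ext p ρ 0 = p := rfl
  have := succAbove_red (ext p ρ) i
  rw [h0] at this
  rw [this, ext_succ]

lemma succAbove_val (p : Fin (n + 2)) (v : Fin (n + 1)) :
    (p.succAbove v).val = if v.val < p.val then v.val else v.val + 1 := by
  rw [Fin.succAbove]
  split <;> rename_i h <;> simp [Fin.lt_def] at h <;> simp [h, Nat.not_lt.mpr]

/-! ### Correspondence of monotonicity and drops. -/

variable {π : Perm (Fin (n + 2))} {ρ : Perm (Fin (n + 1))}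

section Corr
variable (hk : 2 ≤ k) (hp : (π 0).val = k - 1) (h1 : (ρ 0).val = k - 2)
  (hrel : ∀ i : Fin (n + 1),
    (π i.succ).val = if (ρ i).val < k - 1 then (ρ i).val else (ρ i).val + 1)

include hrel in
lemma cmp_iff (i j : Fin (n + 1)) : π i.succ < π j.succ ↔ ρ i < ρ j := by
  rw [Fin.lt_def, Fin.lt_def, hrel, hrel]
  split <;> split <;> omega

include hrel hp in
lemma cmp_lt0 (i : Fin (n + 1)) : π i.succ < π 0 ↔ (ρ i).val < k - 1 := by
  rw [Fin.lt_def, hrel, hp]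
  split <;> omega

include hrel hp in
lemma cmp_gt0 (i : Fin (n + 1)) : π 0 < π i.succ ↔ k - 1 ≤ (ρ i).val := by
  rw [Fin.lt_def, hrel, hp]
  split <;> omega

include hk hp h1 hrel in
lemma mono_iff : IsMonotonePerm π ↔ IsMonotonePerm ρ := by
  constructor
  · intro h i
    rcases h i.succ with H | H
    · exact Or.inl fun j hj => (cmp_iff hrel j i).mp (H j.succ (Fin.succ_lt_succ_iff.mpr hj))
    · exact Or.inr fun j hj => (cmp_iff hrel i j).mp (H j.succ (Fin.succ_lt_succ_iff.mpr hj))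
  · intro h i
    induction i using Fin.cases with
    | zero => exact Or.inl fun j hj => absurd hj (Fin.not_lt_zero _)
    | succ i =>
      rcases eq_or_ne i 0 with rfl | hi0
      · refine Or.inr fun j hj => ?_
        have hj0 : j = 0 := by
          rw [Fin.succ_zero_eq_one, Fin.lt_one_iff] at hj; exact hj
        subst hj0
        exact (cmp_lt0 hp hrel 0).mpr (by omega)
      · have hipos : (0 : Fin (n + 1)) < i := Fin.pos_iff_ne_zero.mpr hi0
        rcases h i with H | H
        · have h0i : ρ 0 < ρ i := H 0 hipos
          have hval : k - 1 ≤ (ρ i).val := by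
            rw [Fin.lt_def, h1] at h0i; omega
          refine Or.inl fun j hj => ?_
          induction j using Fin.cases with
          | zero => exact (cmp_gt0 hp hrel i).mpr hval
          | succ j =>
            exact (cmp_iff hrel j i).mpr (H j (Fin.succ_lt_succ_iff.mp hj))
        · have h0i : ρ i < ρ 0 := H 0 hipos
          have hval : (ρ i).val < k - 1 := by
            rw [Fin.lt_def, h1] at h0i; omega
          refine Or.inr fun j hj => ?_
          induction j using Fin.cases with
          | zero => exact (cmp_lt0 hp hrel i).mpr hval
          | succ j =>
            exact (cmp_iff hrel i j).mpr (H j (Fin.succ_lt_succ_iff.mp hj))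

include hk hp h1 hrel in
lemma drop_succ_iff (i : Fin (n + 1)) (hi : 0 < i.val) :
    IsDrop π i.succ ↔ IsDrop ρ i := by
  constructor
  · intro ⟨_, H⟩
    exact ⟨hi, fun j hj => (cmp_iff hrel i j).mp (H j.succ (Fin.succ_lt_succ_iff.mpr hj))⟩
  · intro ⟨_, H⟩
    refine ⟨by simp, fun j hj => ?_⟩
    induction j using Fin.cases with
    | zero =>
      have h0i : ρ i < ρ 0 := H 0 (Fin.pos_iff_ne_zero.mpr (by
        intro hc; rw [hc] at hi; simp at hi))
      have : (ρ i).val < k - 1 := by rw [Fin.lt_def, h1] at h0i; omega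
      exact (cmp_lt0 hp hrel i).mpr this
    | succ j =>
      exact (cmp_iff hrel i j).mpr (H j (Fin.succ_lt_succ_iff.mp hj))

include hk hp h1 hrel in
lemma drop_one : IsDrop π 1 := by
  refine ⟨by simp, fun j hj => ?_⟩
  have hj0 : j = 0 := by rwa [Fin.lt_one_iff] at hj
  subst hj0
  rw [← Fin.succ_zero_eq_one]
  exact (cmp_lt0 hp hrel 0).mpr (by omega)

set_option linter.unusedSectionVars false in
include hk h1 in
lemma drop_card (hρ : IsMonotonePerm ρ) :
    (Finset.univ.filter
      (fun i : Fin (n + 1) => 0 < i.val ∧ ∀ j, j < i → ρ i < ρ j)).card = k - 2 := by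
  have : (Finset.univ.filter
      (fun i : Fin (n + 1) => 0 < i.val ∧ ∀ j, j < i → ρ i < ρ j)).card
      = (Finset.Iio (ρ 0)).card := by
    refine Finset.card_bij (fun a _ => ρ a) ?_ ?_ ?_
    · intro a ha
      rw [Finset.mem_filter] at ha
      obtain ⟨-, hpos, H⟩ := ha
      exact Finset.mem_Iio.mpr (H 0 (Fin.pos_iff_ne_zero.mpr (by
        intro hc; rw [hc] at hpos; simp at hpos)))
    · intro a _ b _ hab
      exact ρ.injective hab
    · intro v hv
      rw [Finset.mem_Iio] at hv
      refine ⟨ρ.symm v, ?_, by simp⟩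
      rw [Finset.mem_filter]
      have hne : ρ.symm v ≠ 0 := by
        intro hc
        rw [← hc, ρ.apply_symm_apply] at hv
        exact lt_irrefl _ hv
      have hpos : (0 : Fin (n + 1)) < ρ.symm v := Fin.pos_iff_ne_zero.mpr hne
      rcases hρ (ρ.symm v) with H | H
      · exact absurd (by simpa using H 0 hpos) (not_lt.mpr hv.le)
      · exact ⟨Finset.mem_univ _, by rwa [Fin.lt_def] at hpos, H⟩
  rw [this, Fin.card_Iio, h1]

include hk hp h1 hrel in
lemma dr_eq (hρ : IsMonotonePerm ρ) : dr π = dr ρ + k := by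
  have hd1 : IsDrop π 1 := drop_one hk hp h1 hrel
  have h1mem : (1 : Fin (n + 2)) ∈ Finset.univ.filter
      (fun i : Fin (n + 2) => 0 < i.val ∧ ∀ j, j < i → π i < π j) := by
    rw [Finset.mem_filter]
    exact ⟨Finset.mem_univ _, hd1⟩
  have step1 : dr π = (∑ i ∈ Finset.univ.filter
      (fun i : Fin (n + 2) => 0 < i.val ∧ ∀ j, j < i → π i < π j) |>.erase 1,
      (i.val + 1)) + 2 := by
    rw [dr, ← Finset.sum_erase_add _ _ h1mem]
    norm_num
  have step2 : (∑ i ∈ Finset.univ.filter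
      (fun i : Fin (n + 2) => 0 < i.val ∧ ∀ j, j < i → π i < π j) |>.erase 1,
      (i.val + 1)) = ∑ i ∈ Finset.univ.filter
      (fun i : Fin (n + 1) => 0 < i.val ∧ ∀ j, j < i → ρ i < ρ j), (i.val + 2) := by
    refine Finset.sum_bij' (fun a ha => a.pred ?_) (fun b hb => b.succ) ?_ ?_ ?_ ?_ ?_
    · rw [Finset.mem_erase, Finset.mem_filter] at ha
      intro hc
      rw [hc] at ha
      simp at ha
    · intro a ha
      rw [Finset.mem_erase, Finset.mem_filter] at ha
      obtain ⟨hane, -, hdrop⟩ := ha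
      rw [Finset.mem_filter]
      have ha0 : a ≠ 0 := by
        intro hc; rw [hc] at hdrop; simp at hdrop
      have hav1 : a.val ≠ 1 := by
        intro hc
        exact hane (Fin.ext (by rw [hc, Fin.val_one]))
      have hav : 2 ≤ a.val := by
        have := hdrop.1
        omega
      have hpred : 0 < (a.pred ha0).val := by
        rw [Fin.coe_pred]; omega
      have : IsDrop ρ (a.pred ha0) := by
        rw [← drop_succ_iff hk hp h1 hrel _ hpred, Fin.succ_pred]
        exact ⟨hdrop.1, hdrop.2⟩
      exact ⟨Finset.mem_univ _, this⟩
    · intro b hb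
      rw [Finset.mem_filter] at hb
      obtain ⟨-, hdrop⟩ := hb
      rw [Finset.mem_erase, Finset.mem_filter]
      have hdropπ : IsDrop π b.succ := (drop_succ_iff hk hp h1 hrel b hdrop.1).mpr hdrop
      refine ⟨?_, Finset.mem_univ _, hdropπ⟩
      intro hc
      have hc' : b.succ = (1 : Fin (n + 2)) := hc
      have : b.succ.val = 1 := by rw [hc', Fin.val_one]
      rw [Fin.val_succ] at this
      have := hdrop.1
      omega
    · intro a ha; exact Fin.succ_pred _ _
    · intro b hb; exact Fin.pred_succ _
    · intro a ha
      rw [Finset.mem_erase, Finset.mem_filter] at ha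
      rw [Fin.coe_pred]
      have := ha.2.2.1
      omega
  have step3 : (∑ i ∈ Finset.univ.filter
      (fun i : Fin (n + 1) => 0 < i.val ∧ ∀ j, j < i → ρ i < ρ j), (i.val + 2))
      = dr ρ + (k - 2) := by
    rw [dr, ← drop_card hk h1 hρ, Finset.card_eq_sum_ones, ← Finset.sum_add_distrib]
  rw [step1, step2, step3]
  omega

end Corr

/-! ### Relating `red`/`ext` to the value-level relation. -/

lemma red_hrel (π : Perm (Fin (n + 2))) (hp : (π 0).val = k - 1) :
    ∀ i : Fin (n + 1), (π i.succ).val =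
      if ((red π) i).val < k - 1 then ((red π) i).val else ((red π) i).val + 1 := by
  intro i
  rw [← succAbove_red π i, succAbove_val, hp]

lemma red_zero_val (π : Perm (Fin (n + 2))) (hp : (π 0).val = k - 1)
    (h1 : (π 1).val + 2 = k) : ((red π) 0).val = k - 2 := by
  have h := red_hrel π hp 0
  rw [Fin.succ_zero_eq_one] at h
  split at h <;> omega

end MonoBij

/-- (Lemma 1, first half.) Let `M_n^{k,k-1}` (here `n` is `n + 2`, `2 ≤ k ≤ n + 2`, values
are recorded 1-based via `(π i).val + 1`) be the set of monotone permutations with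
`π(1) = k` and `π(2) = k - 1`. The map `π ↦ π̄` with `π̄(1) = k - 1` and, for `i ≥ 2`,
`π̄(i) = π(i+1)` if `π(i+1) < k` and `π̄(i) = π(i+1) - 1` if `π(i+1) > k`, is a bijection
from `M_n^{k,k-1}` onto `M_{n-1}^{k-1}`, and `(-1)^{dr(π̄)} = (-1)^{dr(π) + k}`. -/
theorem monotone_bij_second_is_pred (n k : ℕ) (hk : 2 ≤ k) (hkn : k ≤ n + 2) :
    ∃ Φ : {π : Equiv.Perm (Fin (n + 2)) //
            IsMonotonePerm π ∧ (π 0).val + 1 = k ∧ (π 1).val + 2 = k} →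
          {ρ : Equiv.Perm (Fin (n + 1)) // IsMonotonePerm ρ ∧ (ρ 0).val + 2 = k},
      Function.Bijective Φ ∧
      ∀ π, (∀ i : Fin (n + 1), 0 < i.val →
          (((π.1 i.succ).val + 1 < k → ((Φ π).1 i).val = (π.1 i.succ).val) ∧
           (k < (π.1 i.succ).val + 1 → ((Φ π).1 i).val + 1 = (π.1 i.succ).val))) ∧
        (-1 : ℤ) ^ dr (Φ π).1 = (-1 : ℤ) ^ (dr π.1 + k) := by
  classical
  open MonoBij in
  -- the distinguished pivot value
  have hkn' : k - 1 < n + 2 := by omega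
  set p : Fin (n + 2) := ⟨k - 1, hkn'⟩ with hpdef
  -- facts for elements of the domain
  have domfact : ∀ π : Equiv.Perm (Fin (n + 2)),
      IsMonotonePerm π → (π 0).val + 1 = k → (π 1).val + 2 = k →
      IsMonotonePerm (red π) ∧ ((red π) 0).val + 2 = k := by
    intro π hm h0 h1
    have hp : (π 0).val = k - 1 := by omega
    have hz : ((red π) 0).val = k - 2 := red_zero_val π hp h1
    refine ⟨(mono_iff hk hp hz (red_hrel π hp)).mp hm, by omega⟩
  refine ⟨fun π => ⟨red π.1, domfact π.1 π.2.1 π.2.2.1 π.2.2.2⟩, ?_, ?_⟩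
  · -- bijectivity, via the explicit inverse `ext p`
    rw [Function.bijective_iff_has_inverse]
    have codfact : ∀ ρ : Equiv.Perm (Fin (n + 1)),
        IsMonotonePerm ρ → (ρ 0).val + 2 = k →
        IsMonotonePerm (ext p ρ) ∧ ((ext p ρ) 0).val + 1 = k ∧
          ((ext p ρ) 1).val + 2 = k := by
      intro ρ hm h0
      have hz : (ρ 0).val = k - 2 := by omega
      have hp : ((ext p ρ) 0).val = k - 1 := by rw [ext_zero]
      have hrel : ∀ i : Fin (n + 1), ((ext p ρ) i.succ).val =
          if (ρ i).val < k - 1 then (ρ i).val else (ρ i).val + 1 := by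
        intro i
        rw [ext_succ, succAbove_val]
      have h1v : ((ext p ρ) 1).val = k - 2 := by
        have h := hrel 0
        rw [Fin.succ_zero_eq_one] at h
        rw [h, if_pos (by omega), hz]
      exact ⟨(mono_iff hk hp hz hrel).mpr hm, by omega, by omega⟩
    refine ⟨fun ρ => ⟨ext p ρ.1, (codfact ρ.1 ρ.2.1 ρ.2.2).1,
        (codfact ρ.1 ρ.2.1 ρ.2.2).2.1, (codfact ρ.1 ρ.2.1 ρ.2.2).2.2⟩, ?_, ?_⟩
    · intro π
      refine Subtype.ext ?_
      have hp0 : π.1 0 = p := Fin.ext (by simp [hpdef]; omega)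
      show ext p (red π.1) = π.1
      rw [← hp0, ext_red]
    · intro ρ
      exact Subtype.ext (red_ext p ρ.1)
  · -- the numerical properties
    intro π
    dsimp only
    obtain ⟨hm, h0, h1⟩ := π.2
    have hp : (π.1 0).val = k - 1 := by omega
    have hz : ((red π.1) 0).val = k - 2 := red_zero_val π.1 hp h1
    have hrel := red_hrel π.1 hp
    constructor
    · intro i _
      have h := hrel i
      constructor
      · intro hlt
        split at h <;> omega
      · intro hgt
        split at h <;> omega
    · have hdr : dr π.1 = dr (red π.1) + k :=
        dr_eq hk hp hz hrel ((mono_iff hk hp hz hrel).mp hm)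
      show (-1 : ℤ) ^ dr (red π.1) = _
      rw [hdr, show dr (red π.1) + k + k = dr (red π.1) + 2 * k by ring,
        pow_add, pow_mul]
      norm_num
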